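/- Canonical answer sets of a dl-program are minimal: if I is a canonical answer set of K = (O,P), then there is no canonical answer set I₁ of K with I₁ ⊊ I. -/

import Mathlib

namespace DLP

/-- The three dl-atom input operators ⊕, ⊙, ⊖. -/
inductive Op | oplus | odot | ominus

/-- An abstract dl-atom `DL[S₁ op₁ p₁, …; Q](t)`: a list of inputs together with
the entailment check `O ∪ A ⊨ Q(t)` applied to a set of (possibly negated) assertions. -/
structure DLA (Conc Pred Arg : Type) where
  inputs : List (Conc × Op × Pred)
  entails : Set (Conc × Arg × Bool) → Prop

variable {Conc Pred Arg : Type}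

/-- Atoms of the Herbrand base: predicate applied to an argument tuple. -/
abbrev Atom (Pred Arg : Type) := Pred × Arg

/-- Interpretations are subsets of the Herbrand base. -/
abbrev Interp (Pred Arg : Type) := Set (Atom Pred Arg)

/-- Extension of a predicate under an interpretation. -/
def extOf (I : Interp Pred Arg) : Pred → Set Arg := fun p => {e | (p, e) ∈ I}

/-- The assertions contributed by one input entry, given predicate extensions. -/
def contrib (ext : Pred → Set Arg) : Conc × Op × Pred → Set (Conc × Arg × Bool)
  | (S, Op.oplus, p) => {x | ∃ e ∈ ext p, x = (S, e, true)}
  | (S, Op.odot, p) => {x | ∃ e ∈ ext p, x = (S, e, false)}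
  | (S, Op.ominus, p) => {x | ∃ e, e ∉ ext p ∧ x = (S, e, false)}

/-- Evaluate a dl-atom on given predicate extensions. -/
def DLA.eval (A : DLA Conc Pred Arg) (ext : Pred → Set Arg) : Prop :=
  A.entails {x | ∃ c ∈ A.inputs, x ∈ contrib ext c}

/-- `I ⊨_O A` for a dl-atom `A`. -/
def DLA.sat (A : DLA Conc Pred Arg) (I : Interp Pred Arg) : Prop := A.eval (extOf I)

/-- A dl-atom is monotonic (relative to the program) if `I ⊨_O A` and `I ⊆ I'` imply `I' ⊨_O A`. -/
def DLA.Mono (A : DLA Conc Pred Arg) : Prop :=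
  ∀ ⦃I J : Interp Pred Arg⦄, I ⊆ J → A.sat I → A.sat J

/-- A body element: an ordinary atom or a dl-atom. -/
abbrev BodyElem (Conc Pred Arg : Type) := Atom Pred Arg ⊕ DLA Conc Pred Arg

/-- Satisfaction of a body element: membership for atoms, dl-satisfaction for dl-atoms. -/
def satB (I : Interp Pred Arg) : BodyElem Conc Pred Arg → Prop
  | Sum.inl a => a ∈ I
  | Sum.inr d => d.sat I

/-- A dl-rule `head ← Pos, not Neg`. -/
structure Rule (Conc Pred Arg : Type) where
  head : Atom Pred Arg
  pos : Set (BodyElem Conc Pred Arg)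
  neg : Set (BodyElem Conc Pred Arg)

/-- A dl-program: a set of dl-rules (the ontology `O` is folded into the
entailment relation carried by each dl-atom). -/
structure Prog (Conc Pred Arg : Type) where
  rules : Set (Rule Conc Pred Arg)

/-- `I` satisfies the body of rule `r` relative to `O`. -/
def satBody (I : Interp Pred Arg) (r : Rule Conc Pred Arg) : Prop :=
  (∀ b ∈ r.pos, satB I b) ∧ (∀ b ∈ r.neg, ¬ satB I b)

/-- `I` is a model of the dl-program. -/
def isModel (P : Prog Conc Pred Arg) (I : Interp Pred Arg) : Prop :=
  ∀ r ∈ P.rules, satBody I r → r.head ∈ I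

/-- `I` is a supported model of the dl-program. -/
def Supported (P : Prog Conc Pred Arg) (I : Interp Pred Arg) : Prop :=
  isModel P I ∧ ∀ h ∈ I, ∃ r ∈ P.rules, r.head = h ∧ satBody I r

/-- `I` satisfies the completion `COMP(K)` relative to `O`. -/
def satComp (P : Prog Conc Pred Arg) (I : Interp Pred Arg) : Prop :=
  ∀ h : Atom Pred Arg, h ∈ I ↔ ∃ r ∈ P.rules, r.head = h ∧ satBody I r

/-- A positive dl-program: no negation as failure, and all occurring dl-atoms monotonic. -/
def Positive (P : Prog Conc Pred Arg) : Prop :=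
  (∀ r ∈ P.rules, r.neg = (∅ : Set (BodyElem Conc Pred Arg))) ∧
  (∀ r ∈ P.rules, ∀ d : DLA Conc Pred Arg, Sum.inr d ∈ r.pos ∪ r.neg → d.Mono)

/-- One-step consequence operator `γ_K`. -/
def gamma (P : Prog Conc Pred Arg) (J : Interp Pred Arg) : Interp Pred Arg :=
  {h | ∃ r ∈ P.rules, r.head = h ∧ ∀ b ∈ r.pos, satB J b}

/-- Least fixed point of the one-step consequence operator (Knaster–Tarski form). -/
def lfpGamma (P : Prog Conc Pred Arg) : Interp Pred Arg :=
  ⋂₀ {J | gamma P J ⊆ J}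

/-- The weak dl-transform `wP_O^I`. -/
def weakReduct (P : Prog Conc Pred Arg) (I : Interp Pred Arg) : Prog Conc Pred Arg :=
  ⟨{r' | ∃ r ∈ P.rules,
      (∀ d : DLA Conc Pred Arg, Sum.inr d ∈ r.pos → d.sat I) ∧
      (∀ b ∈ r.neg, ¬ satB I b) ∧
      r' = ⟨r.head, {b ∈ r.pos | ∃ a, b = Sum.inl a}, ∅⟩}⟩

/-- The strong dl-transform `sP_O^I`. -/
def strongReduct (P : Prog Conc Pred Arg) (I : Interp Pred Arg) : Prog Conc Pred Arg :=
  ⟨{r' | ∃ r ∈ P.rules,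
      (∀ d : DLA Conc Pred Arg, Sum.inr d ∈ r.pos → ¬ d.Mono → d.sat I) ∧
      (∀ b ∈ r.neg, ¬ satB I b) ∧
      r' = ⟨r.head,
            {b ∈ r.pos | (∃ a, b = Sum.inl a) ∨ ∃ d : DLA Conc Pred Arg, b = Sum.inr d ∧ d.Mono},
            ∅⟩}⟩

/-- `I` is a weak answer set: the least model of the weak dl-transform. -/
def WeakAS (P : Prog Conc Pred Arg) (I : Interp Pred Arg) : Prop :=
  IsLeast {J | isModel (weakReduct P I) J} I

/-- `I` is a strong answer set: the least model of the strong dl-transform. -/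
def StrongAS (P : Prog Conc Pred Arg) (I : Interp Pred Arg) : Prop :=
  IsLeast {J | isModel (strongReduct P I) J} I

/-- A loop of a directed graph: a nonempty vertex set through which a cycle passes,
visiting only and all its nodes (i.e., strongly connected via nonempty paths inside `L`). -/
def IsLoop {α : Type} (E : α → α → Prop) (L : Set α) : Prop :=
  L.Nonempty ∧ ∀ u ∈ L, ∀ v ∈ L,
    Relation.TransGen (fun a b => E a b ∧ a ∈ L ∧ b ∈ L) u v

/-- A maximal loop. -/
def MaxLoop {α : Type} (E : α → α → Prop) (L : Set α) : Prop :=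
  IsLoop E L ∧ ∀ L', IsLoop E L' → L ⊆ L' → L' = L

/-- A terminating loop: a maximal loop from which no other maximal loop is reachable. -/
def TermLoop {α : Type} (E : α → α → Prop) (L : Set α) : Prop :=
  MaxLoop E L ∧ ∀ L', MaxLoop E L' → L' ≠ L →
    ∀ u ∈ L, ∀ v ∈ L', ¬ Relation.ReflTransGen E u v

/-- Edge relation of the weak positive dependency graph. -/
def edgeWeak (P : Prog Conc Pred Arg) (u v : Atom Pred Arg) : Prop :=
  ∃ r ∈ P.rules, r.head = u ∧ Sum.inl v ∈ r.pos

/-- The dl-atom mentions predicate `q` among its input predicates. -/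
def mentionsPred (d : DLA Conc Pred Arg) (q : Pred) : Prop :=
  ∃ S op, (S, op, q) ∈ d.inputs

/-- Edge relation of the strong positive dependency graph. -/
def edgeStrong (P : Prog Conc Pred Arg) (u v : Atom Pred Arg) : Prop :=
  ∃ r ∈ P.rules, r.head = u ∧
    (Sum.inl v ∈ r.pos ∨
     ∃ d : DLA Conc Pred Arg, Sum.inr d ∈ r.pos ∧ d.Mono ∧ mentionsPred d v.1)

/-- Satisfaction of the weak loop formula `wLF(L,K)` by `I` relative to `O`. -/
def satWLF (P : Prog Conc Pred Arg) (I : Interp Pred Arg) (L : Set (Atom Pred Arg)) : Prop :=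
  (∃ a ∈ L, a ∈ I) →
    ∃ r ∈ P.rules, r.head ∈ L ∧ (∀ a ∈ L, Sum.inl a ∉ r.pos) ∧ satBody I r

/-- Predicate extensions used by the irrelevant formula `IF(A,L)`: predicates occurring
in `L` are renamed to `p_L`, whose extension (under the extension `I'` of `I`) consists of
the `p`-atoms of `I \ L`; other predicates keep their extension in `I`. -/
def extIF (I L : Interp Pred Arg) : Pred → Set Arg := fun p =>
  {e | ((∃ e', (p, e') ∈ L) ∧ (p, e) ∈ I \ L) ∨ ((¬ ∃ e', (p, e') ∈ L) ∧ (p, e) ∈ I)}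

/-- `I' ⊨_O IF(A,L)`: the irrelevant formula of `A` relative to `L`, evaluated under
the extension `I'` of `I` satisfying the renamed-predicate axioms. -/
def satIF (A : DLA Conc Pred Arg) (I L : Interp Pred Arg) : Prop :=
  A.eval (extIF I L)

/-- Satisfaction of `γ(A, L)`-transformed positive body elements
(monotonic dl-atoms are replaced by their irrelevant formulas). -/
def satGammaB (I L : Interp Pred Arg) : BodyElem Conc Pred Arg → Prop
  | Sum.inl a => a ∈ I
  | Sum.inr d => (d.Mono → satIF d I L) ∧ (¬ d.Mono → d.sat I)

/-- Satisfaction of the strong loop formula `sLF(L,K)` by (the extension of) `I`. -/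
def satSLF (P : Prog Conc Pred Arg) (I : Interp Pred Arg) (L : Set (Atom Pred Arg)) : Prop :=
  (∃ a ∈ L, a ∈ I) →
    ∃ r ∈ P.rules, r.head ∈ L ∧ (∀ a ∈ L, Sum.inl a ∉ r.pos) ∧
      (∀ b ∈ r.pos, satGammaB I L b) ∧ (∀ b ∈ r.neg, ¬ satB I b)

/-- `v` is a positive (nonmonotonic) dependency of dl-atom `d`. -/
def posDep (d : DLA Conc Pred Arg) (v : Atom Pred Arg) : Prop :=
  ∃ I : Interp Pred Arg, ¬ d.sat I ∧ d.sat (I ∪ {v})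

/-- `v` is a negative (nonmonotonic) dependency of dl-atom `d`. -/
def negDep (d : DLA Conc Pred Arg) (v : Atom Pred Arg) : Prop :=
  ∃ I : Interp Pred Arg, d.sat I ∧ ¬ d.sat (I ∪ {v})

/-- Edge relation of the canonical dependency graph. -/
def edgeCanon (P : Prog Conc Pred Arg) (u v : Atom Pred Arg) : Prop :=
  ∃ r ∈ P.rules, r.head = u ∧
    ((∃ b ∈ r.pos, ∃ I : Interp Pred Arg, ¬ satB I b ∧ satB (I ∪ {v}) b) ∨
     (∃ b ∈ r.neg, ∃ I : Interp Pred Arg, satB I b ∧ ¬ satB (I ∪ {v}) b))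

/-- Predicate extensions for the positive canonical irrelevant formula `pCF(A,L)`:
only predicates having an atom in `L` that is a positive dependency of `A` are renamed. -/
def extPCF (d : DLA Conc Pred Arg) (I L : Interp Pred Arg) : Pred → Set Arg := fun p =>
  {e | ((∃ e', (p, e') ∈ L ∧ posDep d (p, e')) ∧ (p, e) ∈ I \ L) ∨
       ((¬ ∃ e', (p, e') ∈ L ∧ posDep d (p, e')) ∧ (p, e) ∈ I)}

/-- Predicate extensions for the negative canonical irrelevant formula `nCF(A,L)`. -/
def extNCF (d : DLA Conc Pred Arg) (I L : Interp Pred Arg) : Pred → Set Arg := fun p =>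
  {e | ((∃ e', (p, e') ∈ L ∧ negDep d (p, e')) ∧ (p, e) ∈ I \ L) ∨
       ((¬ ∃ e', (p, e') ∈ L ∧ negDep d (p, e')) ∧ (p, e) ∈ I)}

/-- `I' ⊨_O pCF(A,L)`. -/
def satPCF (d : DLA Conc Pred Arg) (I L : Interp Pred Arg) : Prop := d.eval (extPCF d I L)

/-- `I' ⊨_O nCF(A,L)`. -/
def satNCF (d : DLA Conc Pred Arg) (I L : Interp Pred Arg) : Prop := d.eval (extNCF d I L)

/-- `δ₁(A,L)`: nonmonotonic dl-atoms are replaced by `pCF(A,L)`; otherwise `γ(A,L)`. -/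
def satDelta1 (I L : Interp Pred Arg) : BodyElem Conc Pred Arg → Prop
  | Sum.inl a => a ∈ I
  | Sum.inr d => (¬ d.Mono → satPCF d I L) ∧ (d.Mono → satIF d I L)

/-- `δ₂(B,L)`: nonmonotonic dl-atoms are replaced by `nCF(B,L)`; otherwise unchanged. -/
def satDelta2 (I L : Interp Pred Arg) : BodyElem Conc Pred Arg → Prop
  | Sum.inl a => a ∈ I
  | Sum.inr d => (¬ d.Mono → satNCF d I L) ∧ (d.Mono → d.sat I)

/-- Satisfaction of the canonical loop formula `cLF(L,M,K)` by (the extension of) `I`. -/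
def satCLF (P : Prog Conc Pred Arg) (I M : Interp Pred Arg) (L : Set (Atom Pred Arg)) : Prop :=
  (∃ a ∈ L, a ∈ I) →
    ∃ r ∈ P.rules, r.head ∈ L ∧ (∀ a ∈ L, Sum.inl a ∉ r.pos) ∧ satBody M r ∧
      (∀ b ∈ r.pos, satDelta1 I L b) ∧ (∀ b ∈ r.neg, ¬ satDelta2 I L b)

/-- `I` is a canonical answer set of the dl-program. -/
def CanonAS (P : Prog Conc Pred Arg) (I : Interp Pred Arg) : Prop :=
  satComp P I ∧ ∀ L, IsLoop (edgeCanon P) L → satCLF P I I L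

/-- A normal logic program: all body elements are ordinary atoms. -/
def Normal (P : Prog Conc Pred Arg) : Prop :=
  ∀ r ∈ P.rules, ∀ b ∈ r.pos ∪ r.neg, ∃ a : Atom Pred Arg, b = Sum.inl a

/-- The Gelfond–Lifschitz-style reduct: delete rules with a satisfied negated body
member, and delete all negated members from remaining rules. -/
def glReduct (P : Prog Conc Pred Arg) (I : Interp Pred Arg) : Prog Conc Pred Arg :=
  ⟨{r' | ∃ r ∈ P.rules, (∀ b ∈ r.neg, ¬ satB I b) ∧ r' = ⟨r.head, r.pos, ∅⟩}⟩



lemma flip_finset {α : Type} (Q : Set α → Prop) (S : Finset α) :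
    ∀ I₁ : Set α, ¬ Q I₁ → Q (I₁ ∪ ↑S) → ∃ J v, v ∈ S ∧ ¬ Q J ∧ Q (J ∪ {v}) := by
  classical
  induction S using Finset.induction_on with
  | empty => intro I₁ h1 h2; simp only [Finset.coe_empty, Set.union_empty] at h2; exact absurd h2 h1
  | @insert a s ha ih =>
      intro I₁ h1 h2
      by_cases hq : Q (I₁ ∪ ↑s)
      · obtain ⟨J, v, hv, h3, h4⟩ := ih I₁ h1 hq
        exact ⟨J, v, Finset.mem_insert_of_mem hv, h3, h4⟩
      · refine ⟨I₁ ∪ ↑s, a, Finset.mem_insert_self _ _, hq, ?_⟩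
        have he : (I₁ ∪ ↑(insert a s) : Set α) = (I₁ ∪ ↑s) ∪ {a} := by
          ext x; simp only [Finset.coe_insert, Set.mem_union, Set.mem_insert_iff,
            Set.mem_singleton_iff]
          tauto
        rwa [he] at h2

lemma flip_set {α : Type} [Finite α] (Q : Set α → Prop) (S I₁ : Set α)
    (h1 : ¬ Q I₁) (h2 : Q (I₁ ∪ S)) : ∃ J v, v ∈ S ∧ ¬ Q J ∧ Q (J ∪ {v}) := by
  obtain ⟨J, v, hv, h3, h4⟩ := flip_finset Q (S.toFinite.toFinset) I₁ h1
    (by rwa [Set.Finite.coe_toFinset])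
  exact ⟨J, v, (S.toFinite.mem_toFinset).1 hv, h3, h4⟩

lemma exists_term_scc {α : Type} [Finite α] (E : α → α → Prop) (D : Set α)
    (hD : D.Nonempty) (hsucc : ∀ a ∈ D, ∃ b ∈ D, E a b) :
    ∃ L, L ⊆ D ∧ L.Nonempty ∧
      (∀ u ∈ L, ∀ v ∈ L, Relation.TransGen (fun a b => E a b ∧ a ∈ L ∧ b ∈ L) u v) ∧
      (∀ u ∈ L, ∀ v, E u v → v ∈ D → v ∈ L) := by
  classical
  set E' : α → α → Prop := fun a b => E a b ∧ a ∈ D ∧ b ∈ D with hE'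
  set R : α → Set α := fun u => {v | Relation.ReflTransGen E' u v} with hR
  have hRD : ∀ u ∈ D, R u ⊆ D := by
    intro u hu v hv
    induction hv with
    | refl => exact hu
    | tail _ hE => exact hE.2.2
  have hRtrans : ∀ u v, v ∈ R u → R v ⊆ R u := by
    intro u v hv w hw; exact Relation.ReflTransGen.trans hv hw
  obtain ⟨u0, hu0mem, hmin⟩ := (D.toFinite.toFinset).exists_min_image
    (fun u => (R u).ncard) (by simpa [Set.Finite.toFinset_nonempty] using hD)
  rw [Set.Finite.mem_toFinset] at hu0mem
  refine ⟨R u0, hRD u0 hu0mem, ⟨u0, Relation.ReflTransGen.refl⟩, ?_, ?_⟩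
  · -- strong connectivity
    have hReq : ∀ v ∈ R u0, R v = R u0 := by
      intro v hv
      refine Set.eq_of_subset_of_ncard_le (hRtrans u0 v hv) ?_ (Set.toFinite _)
      exact hmin v (Set.Finite.mem_toFinset _ |>.2 (hRD u0 hu0mem hv))
    have hconv : ∀ x ∈ R u0, ∀ y, Relation.ReflTransGen E' x y →
        y ∈ R u0 ∧ (x = y ∨ Relation.TransGen
          (fun a b => E a b ∧ a ∈ R u0 ∧ b ∈ R u0) x y) := by
      intro x hx y hy
      induction hy with
      | refl => exact ⟨hx, Or.inl rfl⟩
      | @tail b c hxb hbc ih =>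
        obtain ⟨hbL, hcase⟩ := ih
        have hcL : c ∈ R u0 := Relation.ReflTransGen.tail hbL hbc
        have hstep : E b c ∧ b ∈ R u0 ∧ c ∈ R u0 := ⟨hbc.1, hbL, hcL⟩
        refine ⟨hcL, Or.inr ?_⟩
        rcases hcase with rfl | ht
        · exact Relation.TransGen.single hstep
        · exact Relation.TransGen.tail ht hstep
    intro u hu v hv
    obtain ⟨w, hwD, hEuw⟩ := hsucc u (hRD u0 hu0mem hu)
    have hwRu : w ∈ R u := Relation.ReflTransGen.single ⟨hEuw, hRD u0 hu0mem hu, hwD⟩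
    have hwL : w ∈ R u0 := by rw [← hReq u hu]; exact hwRu
    have hstep : E u w ∧ u ∈ R u0 ∧ w ∈ R u0 := ⟨hEuw, hu, hwL⟩
    have hvRw : v ∈ R w := by rw [hReq w hwL]; exact hv
    obtain ⟨_, hcase⟩ := hconv w hwL v hvRw
    rcases hcase with rfl | ht
    · exact Relation.TransGen.single hstep
    · exact Relation.TransGen.head hstep ht
  · intro u hu v hEuv hvD
    have : v ∈ R u := Relation.ReflTransGen.single ⟨hEuv, hRD u0 hu0mem hu, hvD⟩
    have hReq : R u = R u0 :=
      Set.eq_of_subset_of_ncard_le (hRtrans u0 u hu)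
        (hmin u (Set.Finite.mem_toFinset _ |>.2 (hRD u0 hu0mem hu))) (Set.toFinite _)
    rw [← hReq]; exact this


lemma extSel_eq {Pred Arg : Type} (I L : Interp Pred Arg) (C : Pred → Prop) :
    (fun p => {e | (C p ∧ (p, e) ∈ I \ L) ∨ (¬ C p ∧ (p, e) ∈ I)})
      = extOf (I \ {x ∈ L | C x.1}) := by
  funext p; ext e
  by_cases hC : C p <;>
    simp only [Set.mem_setOf_eq, extOf, Set.mem_diff, Set.mem_sep_iff, hC,
      not_true, not_false_iff, true_and, false_and, and_true, and_false,
      or_false, false_or, not_and]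

lemma key_flip {Pred Arg : Type} [Finite (Atom Pred Arg)]
    (Q : Interp Pred Arg → Prop) (I I₁ L S : Interp Pred Arg)
    (hss : I₁ ⊆ I) (hLD : L ⊆ I \ I₁) (hSL : S ⊆ L)
    (h1 : ¬ Q I₁) (h2 : Q (I \ S)) :
    ∃ J v, v ∈ I \ I₁ ∧ v ∉ S ∧ ¬ Q J ∧ Q (J ∪ {v}) := by
  have hsubS : I₁ ⊆ I \ S := fun x hx => ⟨hss hx, fun hxS => (hLD (hSL hxS)).2 hx⟩
  obtain ⟨J, v, hv, h3, h4⟩ := flip_set Q ((I \ S) \ I₁) I₁ h1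
    (by rwa [Set.union_diff_cancel hsubS])
  exact ⟨J, v, ⟨hv.1.1, hv.2⟩, hv.1.2, h3, h4⟩

/-- Canonical answer sets are minimal: no canonical answer set is a
proper subset of another. -/
theorem stmt15 {Conc Pred Arg : Type} [Fintype Pred] [Fintype Arg]
    (K : Prog Conc Pred Arg) (I : Interp Pred Arg) (h : CanonAS K I) :
    ¬ ∃ I₁ : Interp Pred Arg, CanonAS K I₁ ∧ I₁ ⊂ I := by
  classical
  rintro ⟨I₁, h₁, hsub⟩
  haveI : Finite (Atom Pred Arg) := inferInstance
  obtain ⟨hIcomp, hIloop⟩ := h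
  obtain ⟨hI₁comp, -⟩ := h₁
  have hss : I₁ ⊆ I := hsub.1
  have hDne : (I \ I₁).Nonempty := by
    obtain ⟨x, hxI, hxI₁⟩ := Set.exists_of_ssubset hsub
    exact ⟨x, hxI, hxI₁⟩
  have claimA : ∀ a ∈ I \ I₁, ∃ v ∈ I \ I₁, edgeCanon K a v := by
    rintro a ⟨haI, haI₁⟩
    obtain ⟨r, hrK, hrh, hpos, hneg⟩ := (hIcomp a).1 haI
    have hnb : ¬ satBody I₁ r := fun hb => haI₁ ((hI₁comp a).2 ⟨r, hrK, hrh, hb⟩)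
    rw [satBody, not_and_or] at hnb
    rcases hnb with hcase | hcase
    · push_neg at hcase
      obtain ⟨b, hbpos, hbns⟩ := hcase
      cases b with
      | inl c =>
        have hcI : c ∈ I := hpos _ hbpos
        have hcI₁ : c ∉ I₁ := hbns
        exact ⟨c, ⟨hcI, hcI₁⟩, r, hrK, hrh, Or.inl ⟨Sum.inl c, hbpos, ∅,
          by simp [satB], by simp [satB]⟩⟩
      | inr d =>
        obtain ⟨J, v, hv, hnJ, hJv⟩ := flip_set (fun J => d.sat J) (I \ I₁) I₁ hbns
          (by rw [Set.union_diff_cancel hss]; exact hpos _ hbpos)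
        exact ⟨v, hv, r, hrK, hrh, Or.inl ⟨Sum.inr d, hbpos, J, hnJ, hJv⟩⟩
    · push_neg at hcase
      obtain ⟨b, hbneg, hbs⟩ := hcase
      cases b with
      | inl c => exact absurd (hss hbs) (hneg _ hbneg)
      | inr d =>
        obtain ⟨J, v, hv, hnJ, hJv⟩ := flip_set (fun J => ¬ d.sat J) (I \ I₁) I₁
          (not_not.2 hbs) (by rw [Set.union_diff_cancel hss]; exact hneg _ hbneg)
        exact ⟨v, hv, r, hrK, hrh, Or.inr ⟨Sum.inr d, hbneg, J, not_not.1 hnJ, hJv⟩⟩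
  obtain ⟨L, hLD, hLne, hLconn, hLclosed⟩ :=
    exists_term_scc (edgeCanon K) (I \ I₁) hDne claimA
  obtain ⟨a0, ha0⟩ := hLne
  obtain ⟨r, hrK, hrL, hrnoL, hrbody, hrpos, hrneg⟩ :=
    hIloop L ⟨⟨a0, ha0⟩, hLconn⟩ ⟨a0, ha0, (hLD ha0).1⟩
  have hclosed' : ∀ v, edgeCanon K r.head v → v ∈ I \ I₁ → v ∈ L :=
    fun v he hv => hLclosed r.head hrL v he hv
  have hbody₁ : satBody I₁ r := by
    constructor
    · intro b hb
      have hδ := hrpos b hb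
      cases b with
      | inl a =>
        show a ∈ I₁
        by_contra haI₁
        have haI : a ∈ I := hδ
        have haL : a ∉ L := fun hL => hrnoL a hL hb
        have hedge : edgeCanon K r.head a := ⟨r, hrK, rfl, Or.inl ⟨Sum.inl a, hb, ∅,
          by simp [satB], by simp [satB]⟩⟩
        exact haL (hclosed' a hedge ⟨haI, haI₁⟩)
      | inr d =>
        show d.sat I₁
        by_contra hdI₁
        by_cases hm : d.Mono
        · have hIF := hδ.2 hm
          have hsat : d.sat (I \ {x ∈ L | ∃ e', (x.1, e') ∈ L}) := by
            have h0 : extIF I L = extOf (I \ {x ∈ L | ∃ e', (x.1, e') ∈ L}) :=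
              extSel_eq I L _
            simp only [satIF] at hIF
            rwa [h0] at hIF
          obtain ⟨J, v, hvD, hvS, hnJ, hJv⟩ := key_flip (fun J => d.sat J) I I₁ L _
            hss hLD (Set.sep_subset _ _) hdI₁ hsat
          have hvL : v ∉ L := fun hvL => hvS ⟨hvL, v.2, by simpa using hvL⟩
          have hedge : edgeCanon K r.head v := ⟨r, hrK, rfl,
            Or.inl ⟨Sum.inr d, hb, J, hnJ, hJv⟩⟩
          exact hvL (hclosed' v hedge hvD)
        · have hPCF := hδ.1 hm
          have hsat :
              d.sat (I \ {x ∈ L | ∃ e', (x.1, e') ∈ L ∧ posDep d (x.1, e')}) := by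
            have h0 : extPCF d I L
                = extOf (I \ {x ∈ L | ∃ e', (x.1, e') ∈ L ∧ posDep d (x.1, e')}) :=
              extSel_eq I L _
            simp only [satPCF] at hPCF
            rwa [h0] at hPCF
          obtain ⟨J, v, hvD, hvS, hnJ, hJv⟩ := key_flip (fun J => d.sat J) I I₁ L _
            hss hLD (Set.sep_subset _ _) hdI₁ hsat
          have hpd : posDep d v := ⟨J, hnJ, hJv⟩
          have hvL : v ∉ L := fun hvL =>
            hvS ⟨hvL, v.2, by simpa using hvL, by simpa using hpd⟩
          have hedge : edgeCanon K r.head v := ⟨r, hrK, rfl,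
            Or.inl ⟨Sum.inr d, hb, J, hnJ, hJv⟩⟩
          exact hvL (hclosed' v hedge hvD)
    · intro b hbneg hbs
      have hns := hrbody.2 b hbneg
      cases b with
      | inl a => exact hns (hss hbs)
      | inr d =>
        by_cases hm : d.Mono
        · exact hns (hm hss hbs)
        · have hnNCF : ¬ satNCF d I L :=
            fun hn => (hrneg _ hbneg) ⟨fun _ => hn, fun hMono => absurd hMono hm⟩
          have hnsat :
              ¬ d.sat (I \ {x ∈ L | ∃ e', (x.1, e') ∈ L ∧ negDep d (x.1, e')}) := by
            have h0 : extNCF d I L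
                = extOf (I \ {x ∈ L | ∃ e', (x.1, e') ∈ L ∧ negDep d (x.1, e')}) :=
              extSel_eq I L _
            intro hc
            exact hnNCF (by simp only [satNCF]; rw [h0]; exact hc)
          obtain ⟨J, v, hvD, hvS, hnJ, hJv⟩ := key_flip (fun J => ¬ d.sat J) I I₁ L _
            hss hLD (Set.sep_subset _ _) (not_not.2 hbs) hnsat
          have hnd : negDep d v := ⟨J, not_not.1 hnJ, hJv⟩
          have hvL : v ∉ L := fun hvL =>
            hvS ⟨hvL, v.2, by simpa using hvL, by simpa using hnd⟩
          have hedge : edgeCanon K r.head v := ⟨r, hrK, rfl,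
            Or.inr ⟨Sum.inr d, hbneg, J, not_not.1 hnJ, hJv⟩⟩
          exact hvL (hclosed' v hedge hvD)
  exact (hLD hrL).2 ((hI₁comp r.head).2 ⟨r, hrK, rfl, hbody₁⟩)


end DLP
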